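/- Let k be a field of characteristic p > 0, n ≥ 1, and R a subalgebra of the polynomial ring k[X] = k[x₁,…,xₙ]. If the Jacobian ideal J(R) is a principal ideal of k[X], then J(R)^q ⊆ R[X^p], where q = p^n(p−1)/2, i.e. every product of q elements of J(R) lies in the subalgebra R[x₁^p,…,xₙ^p] of k[X] generated by R together with x₁^p,…,xₙ^p. -/

import Mathlib

open MvPolynomial

/-- The Jacobian of an `n`-tuple of polynomials in `n` variables. -/
noncomputable def jac {k : Type*} [CommRing k] {n : ℕ}
    (F : Fin n → MvPolynomial (Fin n) k) : MvPolynomial (Fin n) k :=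
  (Matrix.of fun i j : Fin n => pderiv j (F i)).det

/-- The Jacobian ideal of a subalgebra `R` of `k[X]`: the ideal generated by all
Jacobians of `n`-tuples of elements of `R`. -/
noncomputable def jacIdeal {k : Type*} [CommRing k] {n : ℕ}
    (R : Subalgebra k (MvPolynomial (Fin n) k)) : Ideal (MvPolynomial (Fin n) k) :=
  Ideal.span {g | ∃ F : Fin n → MvPolynomial (Fin n) k, (∀ i, F i ∈ R) ∧ g = jac F}

/-- `R[X^p]`: the subalgebra of `k[X]` generated by `R` together with `x₁^p, …, xₙ^p`. -/
noncomputable def RXp {k : Type*} [CommRing k] {n : ℕ} (p : ℕ)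
    (R : Subalgebra k (MvPolynomial (Fin n) k)) : Subalgebra k (MvPolynomial (Fin n) k) :=
  Algebra.adjoin k ((R : Set (MvPolynomial (Fin n) k)) ∪
    Set.range fun i : Fin n => (X i : MvPolynomial (Fin n) k) ^ p)

namespace JacAux

open Finset Matrix

variable {n p : ℕ}

/-! ### Generic combinatorial setup -/

/-- embedding of exponent tuples below `p` into finsupps -/
noncomputable def emb (c : Fin n → Fin p) : Fin n →₀ ℕ :=
  Finsupp.equivFunOnFinite.symm fun i => (c i : ℕ)

lemma emb_apply (c : Fin n → Fin p) (i : Fin n) : emb c i = (c i : ℕ) := rfl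

lemma emb_injective : Function.Injective (emb (n := n) (p := p)) := by
  intro a b h
  funext i
  have := DFunLike.congr_fun h i
  simpa [emb_apply, Fin.val_injective.eq_iff] using this

/-- total weight of a finsupp exponent -/
def wt (c : Fin n →₀ ℕ) : ℕ := ∑ i, c i

lemma wt_emb (c : Fin n → Fin p) : wt (emb c) = ∑ i, (c i : ℕ) := rfl

lemma wt_add (a b : Fin n →₀ ℕ) : wt (a + b) = wt a + wt b := by
  simp [wt, Finset.sum_add_distrib]

lemma eq_zero_of_wt_eq_zero {c : Fin n →₀ ℕ} (h : wt c = 0) : c = 0 := by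
  have := Finset.sum_eq_zero_iff.1 h
  ext i; exact this i (Finset.mem_univ i)

lemma wt_eq_one {c : Fin n →₀ ℕ} (h : wt c = 1) : ∃ l, c = Finsupp.single l 1 := by
  have hne : ∃ l, c l ≠ 0 := by
    by_contra hall
    push_neg at hall
    have : wt c = 0 := Finset.sum_eq_zero fun i _ => hall i
    omega
  obtain ⟨l, hl⟩ := hne
  have hsplit := Finset.add_sum_erase Finset.univ (fun i => c i) (Finset.mem_univ l)
  have hwt : c l + ∑ i ∈ Finset.univ.erase l, c i = 1 := by
    rw [hsplit]; exact h
  have hcl : c l = 1 := by omega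
  have hrest : ∑ i ∈ Finset.univ.erase l, c i = 0 := by omega
  refine ⟨l, ?_⟩
  ext i
  rcases eq_or_ne i l with rfl | hi
  · simp [hcl]
  · have := Finset.sum_eq_zero_iff.1 hrest i (by simp [hi])
    simp [Finsupp.single_apply, Ne.symm hi, this]

lemma sym_sum_single (t : Fin n → ℕ) :
    ∑ j, Finsupp.single j (t j) = Finsupp.equivFunOnFinite.symm t := by
  ext i
  rw [Finset.sum_apply']
  simp [Finsupp.single_apply]

section Ring

variable {A : Type*} [CommRing A]

lemma prod_X_pow_monomial' (s : Finset (Fin n)) (t : Fin n → ℕ) :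
    (∏ j ∈ s, (X j : MvPolynomial (Fin n) A) ^ t j) =
      monomial (∑ j ∈ s, Finsupp.single j (t j)) 1 := by
  classical
  induction s using Finset.induction_on with
  | empty => simp [monomial_zero']
  | insert _ _ hj ih =>
      rename_i a s
      rw [Finset.prod_insert hj, Finset.sum_insert hj, ih, X_pow_eq_monomial,
        monomial_mul, one_mul]

lemma prod_X_pow_monomial (t : Fin n → ℕ) :
    (∏ j, (X j : MvPolynomial (Fin n) A) ^ t j) =
      monomial (Finsupp.equivFunOnFinite.symm t) 1 := by
  rw [prod_X_pow_monomial', sym_sum_single]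

lemma prod_add_pow (m : Fin n → ℕ) (x y : Fin n → A) :
    (∏ j, (x j + y j) ^ m j) =
      ∑ t ∈ Fintype.piFinset fun j => Finset.range (m j + 1),
        (∏ j, y j ^ t j) * (∏ j, x j ^ (m j - t j)) *
          (∏ j, ((m j).choose (t j) : A)) := by
  have h1 : (∏ j, (x j + y j) ^ m j) =
      ∏ j, ∑ t ∈ Finset.range (m j + 1), y j ^ t * x j ^ (m j - t) * ((m j).choose t : A) := by
    refine Finset.prod_congr rfl fun j _ => ?_
    rw [add_comm (x j) (y j), add_pow]
  rw [h1, Finset.prod_univ_sum]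
  refine Finset.sum_congr rfl fun t _ => ?_
  rw [Finset.prod_mul_distrib, Finset.prod_mul_distrib]

/-- The ideal generated by the `p`-th powers of the variables. -/
noncomputable def Ie (p : ℕ) : Ideal (MvPolynomial (Fin n) A) :=
  Ideal.span (Set.range fun l : Fin n => (X l : MvPolynomial (Fin n) A) ^ p)

lemma coeff_eq_zero_of_mem_Ie {f : MvPolynomial (Fin n) A} (hf : f ∈ Ie p)
    {m : Fin n →₀ ℕ} (hm : ∀ l, m l < p) : coeff m f = 0 := by
  classical
  have H : ∀ f ∈ Ie (A := A) (n := n) p,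
      ∀ m : Fin n →₀ ℕ, (∀ l, m l < p) → coeff m f = 0 := by
    intro f hf
    refine Submodule.span_induction ?_ ?_ ?_ ?_ hf
    · rintro x ⟨l, rfl⟩ m hm
      show coeff m ((X l : MvPolynomial (Fin n) A) ^ p) = 0
      rw [X_pow_eq_monomial, coeff_monomial]
      split
      · next h =>
          exfalso
          have h2 : p = m l := by simpa using DFunLike.congr_fun h l
          have := hm l
          omega
      · rfl
    · intro m _; simp
    · intro f g _ _ hf hg m hm
      simp [coeff_add, hf m hm, hg m hm]
    · intro a f _ hf m hm
      rw [smul_eq_mul, coeff_mul]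
      refine Finset.sum_eq_zero fun x hx => ?_
      have hxm := Finset.HasAntidiagonal.mem_antidiagonal.1 hx
      have : ∀ l, x.2 l < p := by
        intro l
        have : x.1 l + x.2 l = m l := by
          rw [← Finsupp.add_apply, hxm]
        have := hm l
        omega
      rw [hf x.2 this, mul_zero]
  exact H f hf m hm

lemma mem_Ie_of_coeff {f : MvPolynomial (Fin n) A}
    (hf : ∀ m : Fin n →₀ ℕ, (∀ l, m l < p) → coeff m f = 0) : f ∈ Ie p := by
  classical
  rw [← support_sum_monomial_coeff f]
  refine Ideal.sum_mem _ fun v hv => ?_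
  have hcv : coeff v f ≠ 0 := mem_support_iff.1 hv
  have : ¬ ∀ l, v l < p := fun h => hcv (hf v h)
  push_neg at this
  obtain ⟨l, hl⟩ := this
  have hsplit : (Finsupp.single l p) + (v - Finsupp.single l p) = v := by
    ext i
    rcases eq_or_ne i l with rfl | hi
    · simp; omega
    · simp [Finsupp.single_apply, Ne.symm hi]
  have : monomial v (coeff v f) =
      (X l : MvPolynomial (Fin n) A) ^ p * monomial (v - Finsupp.single l p) (coeff v f) := by
    rw [X_pow_eq_monomial, monomial_mul, one_mul, hsplit]
  rw [this]
  exact Ideal.mul_mem_right _ _ (Ideal.subset_span ⟨l, rfl⟩)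

/-! ### Low-degree vanishing -/

/-- `Ord d f` : all monomials of `f` have total degree `≥ d`. -/
def Ord (d : ℕ) (f : MvPolynomial (Fin n) A) : Prop :=
  ∀ c, wt c < d → coeff c f = 0

lemma Ord.mono {d d' : ℕ} {f : MvPolynomial (Fin n) A} (h : Ord d f) (hd : d' ≤ d) :
    Ord d' f := fun c hc => h c (lt_of_lt_of_le hc hd)

lemma ord_zero (d : ℕ) : Ord d (0 : MvPolynomial (Fin n) A) := by
  intro c _; simp

lemma Ord.add {d : ℕ} {f g : MvPolynomial (Fin n) A} (hf : Ord d f) (hg : Ord d g) :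
    Ord d (f + g) := by
  intro c hc; simp [coeff_add, hf c hc, hg c hc]

lemma Ord.sub {d : ℕ} {f g : MvPolynomial (Fin n) A} (hf : Ord d f) (hg : Ord d g) :
    Ord d (f - g) := by
  intro c hc; simp [coeff_sub, hf c hc, hg c hc]

lemma Ord.mul {d e : ℕ} {f g : MvPolynomial (Fin n) A} (hf : Ord d f) (hg : Ord e g) :
    Ord (d + e) (f * g) := by
  classical
  intro c hc
  rw [coeff_mul]
  refine Finset.sum_eq_zero fun x hx => ?_
  have hxm := Finset.HasAntidiagonal.mem_antidiagonal.1 hx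
  have hwt : wt x.1 + wt x.2 = wt c := by rw [← wt_add, hxm]
  by_cases h1 : wt x.1 < d
  · rw [hf x.1 h1, zero_mul]
  · have : wt x.2 < e := by omega
    rw [hg x.2 this, mul_zero]

lemma Ord.pow {d : ℕ} {f : MvPolynomial (Fin n) A} (hf : Ord d f) (m : ℕ) :
    Ord (m * d) (f ^ m) := by
  induction m with
  | zero => intro c hc; omega
  | succ m ih =>
      have h : (m + 1) * d = m * d + d := by ring
      rw [pow_succ, h]
      exact ih.mul hf

lemma Ord.prod {s : Finset (Fin n)} {d : Fin n → ℕ} {f : Fin n → MvPolynomial (Fin n) A}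
    (h : ∀ j ∈ s, Ord (d j) (f j)) : Ord (∑ j ∈ s, d j) (∏ j ∈ s, f j) := by
  classical
  induction s using Finset.induction_on with
  | empty => intro c hc; simp at hc
  | insert _ _ hj ih =>
      rename_i a s
      rw [Finset.prod_insert hj, Finset.sum_insert hj]
      exact (h a (Finset.mem_insert_self a s)).mul
        (ih fun j hjs => h j (Finset.mem_insert_of_mem hjs))

lemma ord_pow_sub_pow {x y : MvPolynomial (Fin n) A}
    (hx : Ord 1 x) (hy : Ord 1 y) (hxy : Ord 2 (x - y)) (m : ℕ) :
    Ord (m + 1) (x ^ m - y ^ m) := by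
  induction m with
  | zero => simpa using ord_zero 1
  | succ m ih =>
      have heq : x ^ (m + 1) - y ^ (m + 1) = x ^ m * (x - y) + (x ^ m - y ^ m) * y := by
        ring
      rw [heq]
      have h1 : Ord (m + 2) (x ^ m * (x - y)) :=
        ((hx.pow m).mul hxy).mono (by omega)
      have h2 : Ord (m + 2) ((x ^ m - y ^ m) * y) :=
        (ih.mul hy).mono (by omega)
      exact (h1.add h2).mono (by omega)

lemma ord_prod_sub_prod {x y : Fin n → MvPolynomial (Fin n) A} {m : Fin n → ℕ}
    (hx : ∀ j, Ord 1 (x j)) (hy : ∀ j, Ord 1 (y j)) (hxy : ∀ j, Ord 2 (x j - y j))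
    (s : Finset (Fin n)) :
    Ord ((∑ j ∈ s, m j) + 1) ((∏ j ∈ s, x j ^ m j) - ∏ j ∈ s, y j ^ m j) := by
  classical
  induction s using Finset.induction_on with
  | empty => simpa using ord_zero 1
  | insert _ _ hj ih =>
      rename_i a s
      rw [Finset.prod_insert hj, Finset.prod_insert hj, Finset.sum_insert hj]
      have heq : x a ^ m a * (∏ j ∈ s, x j ^ m j) - y a ^ m a * ∏ j ∈ s, y j ^ m j =
          (x a ^ m a - y a ^ m a) * (∏ j ∈ s, x j ^ m j) +
            y a ^ m a * ((∏ j ∈ s, x j ^ m j) - ∏ j ∈ s, y j ^ m j) := by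
        ring
      rw [heq]
      have h1 : Ord (m a + (∑ j ∈ s, m j) + 1)
          ((x a ^ m a - y a ^ m a) * ∏ j ∈ s, x j ^ m j) := by
        have hXs : Ord (∑ j ∈ s, m j) (∏ j ∈ s, x j ^ m j) :=
          Ord.prod fun j _ => ((hx j).pow (m j)).mono (by omega)
        exact ((ord_pow_sub_pow (hx a) (hy a) (hxy a) (m a)).mul hXs).mono (by omega)
      have h2 : Ord (m a + (∑ j ∈ s, m j) + 1)
          (y a ^ m a * ((∏ j ∈ s, x j ^ m j) - ∏ j ∈ s, y j ^ m j)) := by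
        exact (((hy a).pow (m a)).mul ih).mono (by omega)
      exact h1.add h2

end Ring

/-! ### Block-triangular determinant helpers -/

section Det

variable {A : Type*} [CommRing A] {ι : Type*} [Fintype ι] [DecidableEq ι]

lemma det_eq_of_blockTriangular (M₁ M₂ : Matrix ι ι A) (b : ι → ℤ)
    (h₁ : M₁.BlockTriangular b) (h₂ : M₂.BlockTriangular b)
    (hdiag : ∀ i j, b i = b j → M₁ i j = M₂ i j) : M₁.det = M₂.det := by
  classical
  rw [h₁.det, h₂.det]
  refine Finset.prod_congr rfl fun a _ => ?_
  congr 1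
  ext i j
  simp only [Matrix.toSquareBlock_def]
  exact hdiag i.1 j.1 (by rw [i.2, j.2])

lemma det_eq_one_of_blockTriangular (M : Matrix ι ι A) (b : ι → ℤ)
    (h : M.BlockTriangular b)
    (hdiag : ∀ i j, b i = b j → M i j = if i = j then 1 else 0) : M.det = 1 := by
  classical
  rw [det_eq_of_blockTriangular M 1 b h Matrix.blockTriangular_one
    (fun i j hb => by rw [hdiag i j hb, Matrix.one_apply]), Matrix.det_one]

end Det

/-! ### The substitution matrix `DM` -/

section DM

variable {A : Type*} [CommRing A]

/-- linear substitution by the matrix `Jm` -/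
noncomputable def SubJ (Jm : Matrix (Fin n) (Fin n) A) :
    MvPolynomial (Fin n) A →ₐ[A] MvPolynomial (Fin n) A :=
  aeval fun j => ∑ l, C (Jm j l) * X l

/-- the matrix of the truncation of a linear substitution to exponents `< p` -/
noncomputable def DM (p : ℕ) (Jm : Matrix (Fin n) (Fin n) A) :
    Matrix (Fin n → Fin p) (Fin n → Fin p) A :=
  Matrix.of fun i c => coeff (emb c) (SubJ Jm (monomial (emb i) 1))

lemma SubJ_X (Jm : Matrix (Fin n) (Fin n) A) (j : Fin n) :
    SubJ Jm (X j) = ∑ l, C (Jm j l) * X l := by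
  simp [SubJ]

lemma SubJ_C (Jm : Matrix (Fin n) (Fin n) A) (r : A) :
    SubJ Jm (C r) = C r := by
  simp [SubJ, aeval_C, algebraMap_eq]

lemma SubJ_monomial_emb (Jm : Matrix (Fin n) (Fin n) A) (i : Fin n → Fin p) :
    SubJ Jm (monomial (emb i) (1 : A)) = ∏ j, (∑ l, C (Jm j l) * X l) ^ (i j : ℕ) := by
  have h : (monomial (emb i) (1 : A)) = ∏ j, (X j : MvPolynomial (Fin n) A) ^ (i j : ℕ) :=
    (prod_X_pow_monomial _).symm
  rw [h, _root_.map_prod]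
  refine Finset.prod_congr rfl fun j _ => ?_
  rw [_root_.map_pow, SubJ_X]

lemma SubJ_comp (J₁ J₂ : Matrix (Fin n) (Fin n) A) :
    (SubJ J₁).comp (SubJ J₂) = SubJ (J₂ * J₁) := by
  apply MvPolynomial.algHom_ext
  intro j
  rw [AlgHom.comp_apply, SubJ_X, SubJ_X, _root_.map_sum]
  have h1 : ∀ l, SubJ J₁ (C (J₂ j l) * X l) = C (J₂ j l) * ∑ m, C (J₁ l m) * X m := by
    intro l
    rw [_root_.map_mul, SubJ_C, SubJ_X]
  simp_rw [h1, Finset.mul_sum]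
  rw [Finset.sum_comm]
  refine Finset.sum_congr rfl fun m _ => ?_
  rw [Matrix.mul_apply, _root_.map_sum, Finset.sum_mul]
  refine Finset.sum_congr rfl fun l _ => ?_
  rw [_root_.map_mul, mul_assoc]

lemma SubJ_mem_Ie [hp : Fact p.Prime] [CharP A p] (Jm : Matrix (Fin n) (Fin n) A)
    {f : MvPolynomial (Fin n) A} (hf : f ∈ Ie p) : SubJ Jm f ∈ Ie p := by
  classical
  refine Submodule.span_induction ?_ ?_ ?_ ?_ hf
  · rintro x ⟨l, rfl⟩
    show SubJ Jm ((X l : MvPolynomial (Fin n) A) ^ p) ∈ Ie p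
    rw [_root_.map_pow, SubJ_X, sum_pow_char]
    refine Ideal.sum_mem _ fun m _ => ?_
    rw [mul_pow]
    exact Ideal.mul_mem_left _ _ (Ideal.subset_span ⟨m, rfl⟩)
  · simp
  · intro f g _ _ hf hg
    rw [_root_.map_add]
    exact Ideal.add_mem _ hf hg
  · intro a f _ hf
    rw [smul_eq_mul, _root_.map_mul]
    exact Ideal.mul_mem_left _ _ hf

lemma DM_mul [hp : Fact p.Prime] [CharP A p] (J₁ J₂ : Matrix (Fin n) (Fin n) A) :
    DM p (J₂ * J₁) = DM p J₂ * DM p J₁ := by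
  classical
  ext i c
  show coeff (emb c) (SubJ (J₂ * J₁) (monomial (emb i) 1)) = _
  have h1 : SubJ (J₂ * J₁) (monomial (emb i) (1 : A)) =
      SubJ J₁ (SubJ J₂ (monomial (emb i) 1)) := by
    rw [← SubJ_comp]; rfl
  set g := SubJ J₂ (monomial (emb i) (1 : A)) with hg
  set gE : MvPolynomial (Fin n) A :=
    ∑ b : Fin n → Fin p, monomial (emb b) (coeff (emb b) g) with hgE
  have hcoe : ∀ m : Fin n →₀ ℕ, (∀ l, m l < p) → coeff m (g - gE) = 0 := by
    intro m hm
    have hembb : emb (fun l => (⟨m l, hm l⟩ : Fin p)) = m := by ext l; rfl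
    have h2 : coeff m gE = coeff m g := by
      rw [hgE, coeff_sum]
      rw [Finset.sum_eq_single (fun l => (⟨m l, hm l⟩ : Fin p))]
      · rw [coeff_monomial, if_pos hembb, hembb]
      · intro b _ hb
        rw [coeff_monomial, if_neg]
        intro hbm
        exact hb (emb_injective (by rw [hbm, hembb]))
      · intro h; exact absurd (Finset.mem_univ _) h
    rw [coeff_sub, h2, sub_self]
  have hrest : g - gE ∈ Ie (A := A) (n := n) p := mem_Ie_of_coeff hcoe
  have hsplit : SubJ J₁ g = SubJ J₁ gE + SubJ J₁ (g - gE) := by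
    rw [← _root_.map_add, add_sub_cancel]
  have hz : coeff (emb c) (SubJ J₁ (g - gE)) = 0 :=
    coeff_eq_zero_of_mem_Ie (SubJ_mem_Ie _ hrest) (fun l => (c l).isLt)
  rw [h1, hsplit, coeff_add, hz, add_zero, hgE, _root_.map_sum, coeff_sum, Matrix.mul_apply]
  refine Finset.sum_congr rfl fun b _ => ?_
  have h3 : (monomial (emb b)) (coeff (emb b) g) = C (coeff (emb b) g) * monomial (emb b) 1 := by
    rw [C_mul_monomial, mul_one]
  rw [h3, _root_.map_mul, SubJ_C, coeff_C_mul]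
  rfl

lemma DM_map {A' : Type*} [CommRing A'] (f : A →+* A') (Jm : Matrix (Fin n) (Fin n) A) :
    DM p (Jm.map f) = (DM p Jm).map f := by
  classical
  have hcomm : ∀ x : MvPolynomial (Fin n) A,
      MvPolynomial.map f (SubJ Jm x) = SubJ (Jm.map f) (MvPolynomial.map f x) := by
    intro x
    have h : (MvPolynomial.map f).comp ((SubJ Jm).toRingHom) =
        ((SubJ (Jm.map f)).toRingHom).comp (MvPolynomial.map f) := by
      apply MvPolynomial.ringHom_ext
      · intro r
        simp [SubJ_C, MvPolynomial.map_C]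
      · intro j
        simp [SubJ_X, MvPolynomial.map_C, MvPolynomial.map_X, Matrix.map_apply]
    exact DFunLike.congr_fun h x
  ext i c
  show coeff (emb c) (SubJ (Jm.map f) (monomial (emb i) 1)) =
    ((DM p Jm).map f) i c
  have hmon : MvPolynomial.map f (monomial (emb i) (1 : A)) = monomial (emb i) (1 : A') := by
    rw [map_monomial, _root_.map_one]
  rw [← hmon, ← hcomm, coeff_map]
  rfl

lemma DM_diagonal (d : Fin n → A) :
    DM p (Matrix.diagonal d) =
      Matrix.diagonal (fun e : Fin n → Fin p => ∏ l, d l ^ (e l : ℕ)) := by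
  classical
  have hX : ∀ l, SubJ (Matrix.diagonal d) (X l) = C (d l) * X l := by
    intro l
    rw [SubJ_X]
    rw [Finset.sum_eq_single l]
    · rw [Matrix.diagonal_apply_eq]
    · intro b _ hb
      rw [Matrix.diagonal_apply_ne _ (Ne.symm hb), _root_.map_zero, zero_mul]
    · intro h; exact absurd (Finset.mem_univ _) h
  ext e f
  show coeff (emb f) (SubJ _ (monomial (emb e) 1)) = _
  have h0 : (monomial (emb e) (1 : A)) = ∏ l, (X l : MvPolynomial (Fin n) A) ^ ((e l : ℕ)) :=
    (prod_X_pow_monomial _).symm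
  have h1 : SubJ (Matrix.diagonal d) (monomial (emb e) (1 : A)) =
      C (∏ l, d l ^ (e l : ℕ)) * monomial (emb e) 1 := by
    rw [h0, _root_.map_prod]
    simp_rw [_root_.map_pow, hX, mul_pow]
    rw [Finset.prod_mul_distrib, prod_X_pow_monomial]
    congr 1
    simp_rw [← _root_.map_pow]
    exact (_root_.map_prod (C : A →+* MvPolynomial (Fin n) A)
      (fun l => d l ^ (e l : ℕ)) Finset.univ).symm
  rw [h1, coeff_C_mul, coeff_monomial, Matrix.diagonal_apply]
  by_cases hef : e = f
  · subst hef; simp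
  · rw [if_neg (fun h => hef (emb_injective h)), if_neg hef, mul_zero]

lemma det_DM_transvection [Nontrivial A] (t : Matrix.TransvectionStruct (Fin n) A) :
    (DM p t.toMatrix).det = 1 := by
  classical
  obtain ⟨i, j, hij, cc⟩ := t
  rw [Matrix.TransvectionStruct.toMatrix_mk]
  have hX : ∀ l, SubJ (Matrix.transvection i j cc) (X l)
      = X l + (if l = i then C cc * X j else 0) := by
    intro l
    rw [SubJ_X]
    have h1 : ∀ m, C (Matrix.transvection i j cc l m) * X m
        = C ((1 : Matrix (Fin n) (Fin n) A) l m) * X m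
          + C ((Matrix.single i j cc) l m) * X m := by
      intro m
      rw [Matrix.transvection, Matrix.add_apply, _root_.map_add, add_mul]
    simp_rw [h1]
    rw [Finset.sum_add_distrib]
    congr 1
    · rw [Finset.sum_eq_single l]
      · rw [Matrix.one_apply_eq, _root_.map_one, one_mul]
      · intro b _ hb
        rw [Matrix.one_apply_ne (Ne.symm hb), _root_.map_zero, zero_mul]
      · intro h; exact absurd (Finset.mem_univ _) h
    · by_cases hli : l = i
      · subst hli
        rw [if_pos rfl, Finset.sum_eq_single j]
        · rw [Matrix.single_apply_same]
        · intro b _ hb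
          rw [Matrix.single_apply_of_ne, _root_.map_zero, zero_mul]
          tauto
        · intro h; exact absurd (Finset.mem_univ _) h
      · rw [if_neg hli]
        refine Finset.sum_eq_zero fun b _ => ?_
        rw [Matrix.single_apply_of_ne, _root_.map_zero, zero_mul]
        tauto
  have hmon : ∀ e : Fin n → Fin p,
      SubJ (Matrix.transvection i j cc) (monomial (emb e) (1 : A)) =
        ∑ r ∈ Finset.range ((e i : ℕ) + 1),
          monomial (Finsupp.single i r + Finsupp.single j ((e i : ℕ) - r)
            + ∑ l ∈ Finset.univ.erase i, Finsupp.single l ((e l : ℕ)))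
            (cc ^ ((e i : ℕ) - r) * ((e i : ℕ).choose r : A)) := by
    intro e
    have h0 : (monomial (emb e) (1 : A)) = ∏ l, (X l : MvPolynomial (Fin n) A) ^ ((e l : ℕ)) :=
      (prod_X_pow_monomial _).symm
    rw [h0, _root_.map_prod]
    simp_rw [_root_.map_pow, hX]
    rw [← Finset.mul_prod_erase Finset.univ _ (Finset.mem_univ i)]
    have h2 : ∀ l ∈ Finset.univ.erase i,
        ((X l : MvPolynomial (Fin n) A) + if l = i then C cc * X j else 0) ^ ((e l : ℕ))
          = (X l : MvPolynomial (Fin n) A) ^ (e l : ℕ) := by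
      intro l hl
      rw [if_neg (Finset.ne_of_mem_erase hl), add_zero]
    rw [Finset.prod_congr rfl h2, prod_X_pow_monomial', if_pos rfl, add_pow, Finset.sum_mul]
    refine Finset.sum_congr rfl fun r hr => ?_
    rw [mul_pow, ← _root_.map_pow, X_pow_eq_monomial, X_pow_eq_monomial,
      ← _root_.map_natCast (C : A →+* MvPolynomial (Fin n) A) ((e i : ℕ).choose r)]
    simp only [C_apply, monomial_mul]
    congr 1
    · simp only [add_zero, zero_add]
    · ring
  have happly : ∀ e f : Fin n → Fin p, DM p (Matrix.transvection i j cc) e f =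
      ∑ r ∈ Finset.range ((e i : ℕ) + 1),
        (if (Finsupp.single i r + Finsupp.single j ((e i : ℕ) - r)
            + ∑ l ∈ Finset.univ.erase i, Finsupp.single l ((e l : ℕ))) = emb f
          then cc ^ ((e i : ℕ) - r) * ((e i : ℕ).choose r : A) else 0) := by
    intro e f
    show coeff (emb f) _ = _
    rw [hmon, coeff_sum]
    exact Finset.sum_congr rfl fun r _ => coeff_monomial _ _ _
  have hμi : ∀ (e : Fin n → Fin p) (r : ℕ), (Finsupp.single i r
      + Finsupp.single j ((e i : ℕ) - r)
      + ∑ l ∈ Finset.univ.erase i, Finsupp.single l ((e l : ℕ))) i = r := by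
    intro e r
    have hz : (∑ l ∈ Finset.univ.erase i, Finsupp.single l ((e l : ℕ))) i = 0 := by
      rw [Finsupp.finset_sum_apply]
      exact Finset.sum_eq_zero fun l hl =>
        Finsupp.single_eq_of_ne' (Finset.ne_of_mem_erase hl)
    rw [Finsupp.add_apply, Finsupp.add_apply, Finsupp.single_eq_same,
      Finsupp.single_eq_of_ne' (Ne.symm hij), hz]
    simp
  have hμtop : ∀ e : Fin n → Fin p, (Finsupp.single i ((e i : ℕ))
      + Finsupp.single j ((e i : ℕ) - (e i : ℕ))
      + ∑ l ∈ Finset.univ.erase i, Finsupp.single l ((e l : ℕ))) = emb e := by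
    intro e
    rw [Nat.sub_self, Finsupp.single_zero, add_zero,
      Finset.add_sum_erase _ (fun l => Finsupp.single l ((e l : ℕ))) (Finset.mem_univ i)]
    exact sym_sum_single _
  refine det_eq_one_of_blockTriangular _ (fun e : Fin n → Fin p => -((e i : ℕ) : ℤ)) ?_ ?_
  · intro e f hlt
    simp only at hlt
    rw [happly]
    refine Finset.sum_eq_zero fun r hr => ?_
    rw [if_neg]
    intro hexp
    have h2 := congrArg (fun m : Fin n →₀ ℕ => m i) hexp
    simp only [hμi] at h2
    have h3 : emb f i = (f i : ℕ) := rfl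
    rw [h3] at h2
    have hr' := Finset.mem_range.1 hr
    omega
  · intro e f hbe
    simp only [neg_inj, Nat.cast_inj] at hbe
    rw [happly]
    rw [Finset.sum_eq_single ((e i : ℕ))]
    · by_cases h : e = f
      · subst h
        rw [if_pos (hμtop e)]
        simp
      · rw [if_neg]
        · rw [if_neg h]
        · rw [hμtop]
          exact fun hh => h (emb_injective hh)
    · intro r hr hrne
      rw [if_neg]
      intro hexp
      have h2 := congrArg (fun m : Fin n →₀ ℕ => m i) hexp
      simp only [hμi] at h2
      have h3 : emb f i = (f i : ℕ) := rfl
      rw [h3] at h2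
      omega
    · intro h
      exact absurd (Finset.mem_range.2 (by omega)) h

lemma fin_sum_val (p : ℕ) : ∑ v : Fin p, (v : ℕ) = p * (p - 1) / 2 := by
  have h0 : ∑ v : Fin p, (v : ℕ) = ∑ i ∈ Finset.range p, i :=
    Fin.sum_univ_eq_sum_range (fun r => r) p
  have h1 := Finset.sum_range_id_mul_two p
  rw [h0]
  omega

lemma sum_wt_fin (hn : 1 ≤ n) (j : Fin n) :
    ∑ e : Fin n → Fin p, ((e j : ℕ)) = p ^ (n - 1) * (p * (p - 1) / 2) := by
  classical
  have h1 : ∑ e : Fin n → Fin p, ((e j : ℕ)) =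
      ∑ x : Fin p × ({ l // l ≠ j } → Fin p), ((x.1 : ℕ)) := by
    apply Fintype.sum_equiv (Equiv.funSplitAt j (Fin p))
    intro e
    rfl
  rw [h1, Fintype.sum_prod_type]
  have h2 : ∀ v : Fin p, (∑ _g : { l // l ≠ j } → Fin p, ((v : ℕ)))
      = (Fintype.card ({ l // l ≠ j } → Fin p)) * (v : ℕ) := by
    intro v
    rw [Finset.sum_const, smul_eq_mul, Finset.card_univ]
  simp_rw [h2]
  rw [← Finset.mul_sum]
  have hcard : Fintype.card ({ l // l ≠ j } → Fin p) = p ^ (n - 1) := by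
    rw [Fintype.card_fun, Fintype.card_fin]
    congr 1
    have hc := Fintype.card_subtype_compl (fun l : Fin n => l = j)
    rw [Fintype.card_subtype_eq, Fintype.card_fin] at hc
    exact hc
  rw [hcard, fin_sum_val]

lemma det_DM_one : (DM p (1 : Matrix (Fin n) (Fin n) A)) = 1 := by
  classical
  rw [← Matrix.diagonal_one, DM_diagonal]
  simp

lemma det_DM_field {K : Type*} [Field K] [hp : Fact p.Prime] [CharP K p] (hn : 1 ≤ n)
    (Jm : Matrix (Fin n) (Fin n) K) :
    (DM p Jm).det = Jm.det ^ (p ^ (n - 1) * (p * (p - 1) / 2)) := by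
  classical
  obtain ⟨L, L', D, hdec⟩ := Matrix.Pivot.exists_list_transvec_mul_diagonal_mul_list_transvec Jm
  have hlist : ∀ (L₀ : List (Matrix.TransvectionStruct (Fin n) K))
      (M : Matrix (Fin n) (Fin n) K),
      (DM p ((L₀.map Matrix.TransvectionStruct.toMatrix).prod * M)).det = (DM p M).det := by
    intro L₀
    induction L₀ with
    | nil => intro M; simp
    | cons t L₀ ih =>
        intro M
        rw [List.map_cons, List.prod_cons, Matrix.mul_assoc, DM_mul, Matrix.det_mul,
          det_DM_transvection, one_mul, ih]
  have hlist' : ∀ (L₀ : List (Matrix.TransvectionStruct (Fin n) K)),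
      (DM p ((L₀.map Matrix.TransvectionStruct.toMatrix).prod)).det = 1 := by
    intro L₀
    have := hlist L₀ 1
    rw [Matrix.mul_one] at this
    rw [this, det_DM_one, Matrix.det_one]
  have hdiag : (DM p (Matrix.diagonal D)).det
      = (∏ l, D l) ^ (p ^ (n - 1) * (p * (p - 1) / 2)) := by
    rw [DM_diagonal, Matrix.det_diagonal]
    rw [Finset.prod_comm]
    have : ∀ l : Fin n, (∏ e : Fin n → Fin p, D l ^ (e l : ℕ)) =
        D l ^ (p ^ (n - 1) * (p * (p - 1) / 2)) := by
      intro l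
      rw [Finset.prod_pow_eq_pow_sum, sum_wt_fin hn]
    rw [Finset.prod_congr rfl fun l _ => this l, Finset.prod_pow]
  rw [hdec, Matrix.mul_assoc, hlist, DM_mul, Matrix.det_mul, hlist', mul_one, hdiag]
  congr 1
  rw [Matrix.det_mul, Matrix.det_mul, Matrix.TransvectionStruct.det_toMatrix_prod,
    Matrix.TransvectionStruct.det_toMatrix_prod, Matrix.det_diagonal, one_mul, mul_one]

lemma det_DM_domain {A : Type*} [CommRing A] [IsDomain A] [hp : Fact p.Prime] [CharP A p]
    (hn : 1 ≤ n) (Jm : Matrix (Fin n) (Fin n) A) :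
    (DM p Jm).det = Jm.det ^ (p ^ (n - 1) * (p * (p - 1) / 2)) := by
  classical
  set K := FractionRing A
  haveI : CharP K p := charP_of_injective_algebraMap (IsFractionRing.injective A K) p
  apply IsFractionRing.injective A K
  rw [_root_.map_pow, RingHom.map_det, RingHom.map_det, RingHom.mapMatrix_apply,
    RingHom.mapMatrix_apply, ← DM_map, det_DM_field hn]

end DM

/-! ### The Taylor homomorphism -/

section Taylor

variable {k : Type*} [CommRing k]

local notation "B" => MvPolynomial (Fin n) k
local notation "B'" => MvPolynomial (Fin n) (MvPolynomial (Fin n) k)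

/-- Taylor expansion `g ↦ g(X + ε)`. -/
noncomputable def tay : MvPolynomial (Fin n) k →ₐ[k] B' :=
  aeval fun i => C (X i) + X i

lemma tay_C (r : k) : tay (C r : B) = C (C r) := by
  rw [tay, aeval_C, IsScalarTower.algebraMap_apply k (MvPolynomial (Fin n) k)
    (MvPolynomial (Fin n) (MvPolynomial (Fin n) k)), algebraMap_eq, algebraMap_eq]

lemma monomial_eq_prod (μ : Fin n →₀ ℕ) (r : k) :
    (monomial μ r : B) = C r * ∏ j, (X j : B) ^ μ j := by
  rw [monomial_eq, Finsupp.prod_fintype]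
  exact fun i => pow_zero _

lemma coeff_tay_monomial (μ : Fin n →₀ ℕ) (r : k) (c : Fin n →₀ ℕ) :
    coeff c (tay (monomial μ r : B)) =
      (∏ j, (μ j).choose (c j) : ℕ) • monomial (μ - c) r := by
  classical
  have h1 : tay (monomial μ r : B) = C (C r) * ∏ j, (C (X j) + (X j : B')) ^ μ j := by
    rw [monomial_eq_prod, _root_.map_mul, tay_C, _root_.map_prod]
    congr 1
    refine Finset.prod_congr rfl fun j _ => ?_
    rw [_root_.map_pow, tay, aeval_X]
  rw [h1, prod_add_pow (fun j => μ j) (fun j => (C (X j) : B')) (fun j => (X j : B')),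
    Finset.mul_sum, coeff_sum]
  have hterm : ∀ t : Fin n → ℕ,
      C (C r) * ((∏ j, (X j : B') ^ t j) * (∏ j, (C (X j) : B') ^ (μ j - t j)) *
        (∏ j, (((μ j).choose (t j) : ℕ) : B'))) =
      C ((C r * ∏ j, (X j : B) ^ (μ j - t j)) * ((∏ j, (μ j).choose (t j) : ℕ) : B)) *
        monomial (Finsupp.equivFunOnFinite.symm t) (1 : B) := by
    intro t
    have hx : (∏ j, (C (X j) : B') ^ (μ j - t j)) = C (∏ j, (X j : B) ^ (μ j - t j)) := by
      simp_rw [← _root_.map_pow]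
      exact (_root_.map_prod (C : B →+* B') _ _).symm
    have hc : (∏ j, (((μ j).choose (t j) : ℕ) : B')) =
        C (((∏ j, (μ j).choose (t j) : ℕ) : B)) := by
      rw [← Nat.cast_prod, ← _root_.map_natCast (C : B →+* B')]
    rw [hx, hc, prod_X_pow_monomial, _root_.map_mul, _root_.map_mul]
    ring
  simp_rw [hterm]
  have hval : ∀ t : Fin n → ℕ,
      coeff c (C ((C r * ∏ j, (X j : B) ^ (μ j - t j)) * ((∏ j, (μ j).choose (t j) : ℕ) : B)) *
        monomial (Finsupp.equivFunOnFinite.symm t) (1 : B)) =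
      if Finsupp.equivFunOnFinite.symm t = c then
        (C r * ∏ j, (X j : B) ^ (μ j - t j)) * ((∏ j, (μ j).choose (t j) : ℕ) : B) else 0 := by
    intro t
    rw [coeff_C_mul, coeff_monomial]
    split <;> simp
  simp_rw [hval]
  rw [Finset.sum_eq_single (fun j => c j)]
  · have hsym : Finsupp.equivFunOnFinite.symm (fun j => c j) = c := by
      ext i; simp
    rw [if_pos hsym]
    have hmc : (monomial (μ - c) r : B) = C r * ∏ j, (X j : B) ^ (μ j - c j) := by
      rw [monomial_eq_prod]
      refine congrArg (fun z => C r * z) ?_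
      refine Finset.prod_congr rfl fun j _ => ?_
      simp [Finsupp.coe_tsub]
    rw [hmc, nsmul_eq_mul]
    ring
  · intro t ht htne
    rw [if_neg]
    intro hsym
    apply htne
    funext j
    have := DFunLike.congr_fun hsym j
    simpa using this
  · intro hnot
    have h0 : ∃ j, ¬ c j < μ j + 1 := by
      by_contra hall
      push_neg at hall
      exact hnot (by
        rw [Fintype.mem_piFinset]
        intro j
        exact Finset.mem_range.2 (hall j))
    obtain ⟨j0, hj0⟩ := h0
    rw [if_pos, mul_comm]
    · have : (μ j0).choose (c j0) = 0 := Nat.choose_eq_zero_of_lt (by omega)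
      rw [Finset.prod_eq_zero (Finset.mem_univ j0) this]
      simp
    · ext i; simp

lemma coeff_zero_tay (g : B) : coeff 0 (tay g) = g := by
  induction g using MvPolynomial.induction_on' with
  | monomial μ r => simp [coeff_tay_monomial]
  | add f g hf hg => rw [_root_.map_add, coeff_add, hf, hg]

lemma coeff_single_tay (l : Fin n) (g : B) :
    coeff (Finsupp.single l 1) (tay g) = pderiv l g := by
  classical
  induction g using MvPolynomial.induction_on' with
  | monomial μ r =>
      rw [coeff_tay_monomial, pderiv_monomial]
      have hch : (∏ j, (μ j).choose ((Finsupp.single l 1) j)) = μ l := by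
        rw [Finset.prod_eq_single l]
        · rw [Finsupp.single_eq_same, Nat.choose_one_right]
        · intro b _ hb
          rw [Finsupp.single_eq_of_ne' (Ne.symm hb), Nat.choose_zero_right]
        · intro hl; exact absurd (Finset.mem_univ _) hl
      rw [hch, smul_monomial]
      congr 1
      rw [nsmul_eq_mul, mul_comm]
  | add f g hf hg => rw [_root_.map_add, coeff_add, _root_.map_add, hf, hg]

end Taylor

/-! ### The matrices `W`, `P`, `Q`, `M`, `T` -/

section Main

variable {k : Type*} [Field k] (p : ℕ) [hp : Fact p.Prime] [CharP k p] {n : ℕ}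

local notation "B" => MvPolynomial (Fin n) k
local notation "B'" => MvPolynomial (Fin n) (MvPolynomial (Fin n) k)
local notation "ι" => (Fin n → Fin p)

/-- `F^a` -/
noncomputable def FP (F : Fin n → B) (a : ι) : B := ∏ j, F j ^ (a j : ℕ)

/-- `u_j`, the positive-degree part of the Taylor expansion of `F j` -/
noncomputable def uu (F : Fin n → B) (j : Fin n) : B' := tay (F j) - C (F j)

noncomputable def Wm (F : Fin n → B) : Matrix ι ι B :=
  Matrix.of fun a c => coeff (emb c) (tay (FP p F a))

noncomputable def Pm (F : Fin n → B) : Matrix ι ι B :=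
  Matrix.of fun a i =>
    (∏ j, ((a j : ℕ).choose (i j : ℕ)) : ℕ) • ∏ j, F j ^ ((a j : ℕ) - (i j : ℕ))

noncomputable def Qm (F : Fin n → B) : Matrix ι ι B :=
  Matrix.of fun i c => coeff (emb c) (∏ j, uu F j ^ (i j : ℕ))

/-- the Jacobian matrix -/
noncomputable def Jm (F : Fin n → B) : Matrix (Fin n) (Fin n) B :=
  Matrix.of fun i j => pderiv j (F i)

lemma uu_coeff_zero (F : Fin n → B) (j : Fin n) : coeff 0 (uu F j) = 0 := by
  rw [uu, coeff_sub, coeff_zero_tay, coeff_C, if_pos rfl, sub_self]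

lemma uu_coeff_single (F : Fin n → B) (j l : Fin n) :
    coeff (Finsupp.single l 1) (uu F j) = pderiv l (F j) := by
  classical
  rw [uu, coeff_sub, coeff_single_tay, coeff_C, if_neg, sub_zero]
  exact fun h => (fun hz => one_ne_zero (Finsupp.single_eq_zero.1 hz)) h.symm

lemma W_eq_P_mul_Q (F : Fin n → B) : Wm p F = Pm p F * Qm p F := by
  classical
  refine Matrix.ext fun a c => ?_
  show coeff (emb c) (tay (FP p F a)) = _
  have h1 : tay (FP p F a) = ∏ j, ((C (F j) : B') + uu F j) ^ (a j : ℕ) := by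
    rw [FP, _root_.map_prod]
    refine Finset.prod_congr rfl fun j _ => ?_
    rw [_root_.map_pow, uu, add_sub_cancel]
  rw [h1, prod_add_pow (fun j => (a j : ℕ)) (fun j => (C (F j) : B')) (fun j => uu F j),
    coeff_sum]
  have hterm : ∀ t : Fin n → ℕ,
      coeff (emb c) ((∏ j, uu F j ^ t j) * (∏ j, (C (F j) : B') ^ ((a j : ℕ) - t j)) *
        (∏ j, (((a j : ℕ).choose (t j) : ℕ) : B'))) =
      ((∏ j, (a j : ℕ).choose (t j) : ℕ) • ∏ j, F j ^ ((a j : ℕ) - t j)) *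
        coeff (emb c) (∏ j, uu F j ^ t j) := by
    intro t
    have hx : (∏ j, (C (F j) : B') ^ ((a j : ℕ) - t j)) =
        C (∏ j, F j ^ ((a j : ℕ) - t j)) := by
      simp_rw [← _root_.map_pow]
      exact (_root_.map_prod (C : B →+* B') _ _).symm
    have hc : (∏ j, (((a j : ℕ).choose (t j) : ℕ) : B')) =
        C (((∏ j, (a j : ℕ).choose (t j) : ℕ) : B)) := by
      rw [← Nat.cast_prod, ← _root_.map_natCast (C : B →+* B')]
    rw [hx, hc, mul_assoc, ← _root_.map_mul, mul_comm, coeff_C_mul, nsmul_eq_mul]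
    ring
  simp_rw [hterm]
  rw [Matrix.mul_apply]
  have hzero : ∀ i : Fin n → Fin p, i ∈ (Finset.univ : Finset (Fin n → Fin p)) →
      i ∉ Finset.univ.filter (fun i : Fin n → Fin p => ∀ j, (i j : ℕ) ≤ (a j : ℕ)) →
      Pm p F a i * Qm p F i c = 0 := by
    intro i _ hi
    simp only [Finset.mem_filter, Finset.mem_univ, true_and, not_forall, not_le] at hi
    obtain ⟨j0, hj0⟩ := hi
    have hch : (∏ j, (a j : ℕ).choose ((i j : ℕ))) = 0 :=
      Finset.prod_eq_zero (Finset.mem_univ j0) (Nat.choose_eq_zero_of_lt hj0)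
    show ((∏ j, (a j : ℕ).choose ((i j : ℕ)) : ℕ) • ∏ j, F j ^ ((a j : ℕ) - (i j : ℕ)))
      * Qm p F i c = 0
    rw [hch, zero_smul, zero_mul]
  rw [← Finset.sum_subset (Finset.filter_subset _ Finset.univ) hzero]
  refine Finset.sum_bij'
    (fun (t : Fin n → ℕ) (_ : t ∈ Fintype.piFinset fun j => Finset.range ((a j : ℕ) + 1)) =>
      (fun j => (⟨t j % p, Nat.mod_lt _ hp.out.pos⟩ : Fin p)))
    (fun (e : Fin n → Fin p) (_ : e ∈ Finset.univ.filter
        (fun i : Fin n → Fin p => ∀ j, (i j : ℕ) ≤ (a j : ℕ))) => fun j => (e j : ℕ))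
    ?_ ?_ ?_ ?_ ?_
  · intro t ht
    rw [Fintype.mem_piFinset] at ht
    simp only [Finset.mem_filter, Finset.mem_univ, true_and]
    intro j
    have h2 := Finset.mem_range.1 (ht j)
    have h3 : t j % p = t j := Nat.mod_eq_of_lt (lt_of_le_of_lt (by omega) (a j).isLt)
    show (t j % p) ≤ (a j : ℕ)
    omega
  · intro e he
    rw [Fintype.mem_piFinset]
    intro j
    simp only [Finset.mem_filter, Finset.mem_univ, true_and] at he
    have h4 := he j
    have h5 := (a j).isLt
    show (e j : ℕ) ∈ Finset.range ((a j : ℕ) + 1)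
    exact Finset.mem_range.2 (by omega)
  · intro t ht
    rw [Fintype.mem_piFinset] at ht
    funext j
    have h2 := Finset.mem_range.1 (ht j)
    exact Nat.mod_eq_of_lt (lt_of_le_of_lt (by omega) (a j).isLt)
  · intro e he
    funext j
    exact Fin.val_injective (Nat.mod_eq_of_lt (e j).isLt)
  · intro t ht
    rw [Fintype.mem_piFinset] at ht
    have hmod : ∀ j, t j % p = t j := by
      intro j
      have h2 := Finset.mem_range.1 (ht j)
      exact Nat.mod_eq_of_lt (lt_of_le_of_lt (by omega) (a j).isLt)
    show ((∏ j, (a j : ℕ).choose (t j) : ℕ) • ∏ j, F j ^ ((a j : ℕ) - t j)) *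
        coeff (emb c) (∏ j, uu F j ^ t j)
      = ((∏ j, (a j : ℕ).choose (t j % p) : ℕ) • ∏ j, F j ^ ((a j : ℕ) - (t j % p))) *
        coeff (emb c) (∏ j, uu F j ^ (t j % p))
    simp_rw [hmod]

lemma det_P (F : Fin n → B) : (Pm p F).det = 1 := by
  classical
  refine det_eq_one_of_blockTriangular _
    (fun e : Fin n → Fin p => -((∑ j, (e j : ℕ) : ℕ) : ℤ)) ?_ ?_
  · intro a i hlt
    simp only [neg_lt_neg_iff, Nat.cast_lt] at hlt
    by_cases hle : ∀ j, (i j : ℕ) ≤ (a j : ℕ)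
    · exfalso
      have := Finset.sum_le_sum (fun j (_ : j ∈ Finset.univ) => hle j)
      omega
    · push_neg at hle
      obtain ⟨j0, hj0⟩ := hle
      show ((∏ j, (a j : ℕ).choose ((i j : ℕ)) : ℕ))
        • (∏ j, F j ^ ((a j : ℕ) - (i j : ℕ))) = 0
      rw [Finset.prod_eq_zero (Finset.mem_univ j0) (Nat.choose_eq_zero_of_lt hj0), zero_smul]
  · intro a i hb
    simp only [neg_inj, Nat.cast_inj] at hb
    by_cases h : a = i
    · subst h
      rw [if_pos rfl]
      show ((∏ j, (a j : ℕ).choose ((a j : ℕ)) : ℕ)) • (∏ j, F j ^ ((a j : ℕ) - (a j : ℕ))) = 1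
      simp
    · rw [if_neg h]
      by_cases hle : ∀ j, (i j : ℕ) ≤ (a j : ℕ)
      · exfalso
        apply h
        funext j
        have hall : ∀ j0, (a j0 : ℕ) = (i j0 : ℕ) := by
          by_contra hcon
          push_neg at hcon
          obtain ⟨j1, hj1⟩ := hcon
          have hlt1 : (i j1 : ℕ) < (a j1 : ℕ) :=
            lt_of_le_of_ne (hle j1) (fun e => hj1 e.symm)
          have := Finset.sum_lt_sum (fun j (_ : j ∈ Finset.univ) => hle j)
            ⟨j1, Finset.mem_univ _, hlt1⟩
          omega
        exact Fin.val_injective (hall j)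
      · push_neg at hle
        obtain ⟨j0, hj0⟩ := hle
        show ((∏ j, (a j : ℕ).choose ((i j : ℕ)) : ℕ))
          • (∏ j, F j ^ ((a j : ℕ) - (i j : ℕ))) = 0
        rw [Finset.prod_eq_zero (Finset.mem_univ j0) (Nat.choose_eq_zero_of_lt hj0), zero_smul]

lemma det_Q (F : Fin n → B) : (Qm p F).det = (DM p (Jm F)).det := by
  classical
  set L : Fin n → B' := fun j => SubJ (Jm F) (X j) with hL
  have hord_u : ∀ j, Ord 1 (uu F j) := by
    intro j c hc
    have hc0 : c = 0 := eq_zero_of_wt_eq_zero (by omega)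
    rw [hc0]; exact uu_coeff_zero F j
  have hLc0 : ∀ j, coeff 0 (L j) = 0 := by
    intro j
    show coeff 0 (SubJ (Jm F) (X j)) = 0
    rw [SubJ_X, coeff_sum]
    refine Finset.sum_eq_zero fun l _ => ?_
    rw [coeff_C_mul, coeff_X', if_neg, mul_zero]
    exact fun h => (fun hz => one_ne_zero (Finsupp.single_eq_zero.1 hz)) h
  have hord_L : ∀ j, Ord 1 (L j) := by
    intro j c hc
    have hc0 : c = 0 := eq_zero_of_wt_eq_zero (by omega)
    rw [hc0]; exact hLc0 j
  have hLsingle : ∀ j l, coeff (Finsupp.single l 1) (L j) = pderiv l (F j) := by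
    intro j l
    show coeff (Finsupp.single l 1) (SubJ (Jm F) (X j)) = pderiv l (F j)
    rw [SubJ_X, coeff_sum, Finset.sum_eq_single l]
    · rw [coeff_C_mul, coeff_X', if_pos rfl, mul_one]; rfl
    · intro b _ hb
      rw [coeff_C_mul, coeff_X', if_neg, mul_zero]
      exact fun h => hb (Finsupp.single_left_injective one_ne_zero h)
    · intro h; exact absurd (Finset.mem_univ _) h
  have hord_diff : ∀ j, Ord 2 (uu F j - L j) := by
    intro j c hc
    rw [coeff_sub]
    have : wt c = 0 ∨ wt c = 1 := by omega
    rcases this with h0 | h1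
    · rw [eq_zero_of_wt_eq_zero h0, uu_coeff_zero, hLc0, sub_self]
    · obtain ⟨l, rfl⟩ := wt_eq_one h1
      rw [uu_coeff_single, hLsingle, sub_self]
  have hDMentry : ∀ i c : Fin n → Fin p,
      DM p (Jm F) i c = coeff (emb c) (∏ j, L j ^ (i j : ℕ)) := by
    intro i c
    show coeff (emb c) (SubJ (Jm F) (monomial (emb i) 1)) = _
    rw [SubJ_monomial_emb]
    simp_rw [hL, SubJ_X]
  have hwt : ∀ c : Fin n → Fin p, wt (emb c) = ∑ j, (c j : ℕ) := fun _ => rfl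
  refine det_eq_of_blockTriangular _ _
    (fun e : Fin n → Fin p => ((∑ j, (e j : ℕ) : ℕ) : ℤ)) ?_ ?_ ?_
  · intro i c hlt
    simp only [Nat.cast_lt] at hlt
    show coeff (emb c) (∏ j, uu F j ^ (i j : ℕ)) = 0
    have hOrd : Ord (∑ j, (i j : ℕ)) (∏ j, uu F j ^ (i j : ℕ)) :=
      Ord.prod (fun j _ => ((hord_u j).pow _).mono (by omega))
    exact hOrd _ (by rw [hwt]; omega)
  · intro i c hlt
    simp only [Nat.cast_lt] at hlt
    rw [hDMentry]
    have hOrd : Ord (∑ j, (i j : ℕ)) (∏ j, L j ^ (i j : ℕ)) :=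
      Ord.prod (fun j _ => ((hord_L j).pow _).mono (by omega))
    exact hOrd _ (by rw [hwt]; omega)
  · intro i c hbe
    simp only [Nat.cast_inj] at hbe
    rw [hDMentry]
    show coeff (emb c) (∏ j, uu F j ^ (i j : ℕ)) = _
    have hdiff := ord_prod_sub_prod (x := fun j => uu F j) (y := L)
      (m := fun j => (i j : ℕ)) hord_u hord_L hord_diff Finset.univ
    have h2 := hdiff (emb c) (by rw [hwt]; omega)
    rw [coeff_sub, sub_eq_zero] at h2
    exact h2

/-- the subalgebra `k[X^p]` -/
noncomputable def AP : Subalgebra k B := (expand p : B →ₐ[k] B).range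

lemma decomp (g : B) :
    ∃ m : ι → AP (k := k) (n := n) p,
      g = ∑ b : ι, (m b : B) * monomial (emb b) 1 := by
  classical
  induction g using MvPolynomial.induction_on' with
  | monomial μ r =>
      set e : Fin n → Fin p := fun jj => (⟨μ jj % p, Nat.mod_lt _ hp.out.pos⟩ : Fin p) with he
      set d : Fin n →₀ ℕ := Finsupp.equivFunOnFinite.symm (fun jj => μ jj / p) with hd
      refine ⟨fun b => if b = e then
        ⟨expand p (monomial d r), ⟨monomial d r, rfl⟩⟩ else 0, ?_⟩
      have hsum : ∀ b : Fin n → Fin p,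
          (((if b = e then (⟨expand p (monomial d r), ⟨monomial d r, rfl⟩⟩ : AP (k := k) p)
            else 0) : AP (k := k) p) : B) * monomial (emb b) 1 =
          if b = e then (expand p (monomial d r) : B) * monomial (emb b) 1 else 0 := by
        intro b
        split <;> simp
      simp_rw [hsum]
      rw [Finset.sum_ite_eq' Finset.univ e
        (fun b => (expand p (monomial d r) : B) * monomial (emb b) 1), if_pos (Finset.mem_univ e)]
      have hexp : (expand p (monomial d r) : B) = C r * ∏ j, (X j : B) ^ (p * (μ j / p)) := by
        rw [monomial_eq_prod, _root_.map_mul, expand_C, _root_.map_prod]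
        refine congrArg (fun z => C r * z) ?_
        refine Finset.prod_congr rfl fun j _ => ?_
        rw [_root_.map_pow, expand_X, ← pow_mul]
        rfl
      rw [hexp, monomial_eq_prod]
      have hmon : (monomial (emb e) (1 : k) : B) = ∏ j, (X j : B) ^ ((e j : ℕ)) :=
        (prod_X_pow_monomial _).symm
      rw [hmon, mul_assoc, ← Finset.prod_mul_distrib]
      refine congrArg (fun z => C r * z) (Finset.prod_congr rfl fun j _ => ?_)
      rw [← pow_add]
      congr 1
      show μ j = p * (μ j / p) + μ j % p
      exact (Nat.div_add_mod (μ j) p).symm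
  | add f g hf hg =>
      obtain ⟨m1, h1⟩ := hf
      obtain ⟨m2, h2⟩ := hg
      refine ⟨m1 + m2, ?_⟩
      rw [h1, h2, ← Finset.sum_add_distrib]
      refine Finset.sum_congr rfl fun b _ => ?_
      have hco : (((m1 + m2) b : AP (k := k) (n := n) p) : B) = (m1 b : B) + (m2 b : B) := rfl
      rw [hco, add_mul]

lemma tay_sub_C_mem (y : B) (hy : y ∈ AP (k := k) (n := n) p) :
    tay y - C y ∈ Ie (A := B) p := by
  obtain ⟨g, rfl⟩ := hy
  have hcomp : (Ideal.Quotient.mkₐ k (Ie (A := B) (n := n) p)).comp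
      (tay.comp (expand p : B →ₐ[k] B)) =
      (Ideal.Quotient.mkₐ k (Ie (A := B) (n := n) p)).comp
        ((IsScalarTower.toAlgHom k B B').comp (expand p : B →ₐ[k] B)) := by
    apply MvPolynomial.algHom_ext
    intro i
    simp only [AlgHom.comp_apply, expand_X, Ideal.Quotient.mkₐ_eq_mk]
    rw [Ideal.Quotient.eq]
    have h1 : tay ((X i : B) ^ p) = (C (X i) + (X i : B')) ^ p := by
      rw [_root_.map_pow]
      congr 1
      rw [tay, aeval_X]
    have h2 : (IsScalarTower.toAlgHom k B B') ((X i : B) ^ p) = (C (X i) : B') ^ p := by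
      rw [IsScalarTower.coe_toAlgHom', algebraMap_eq, _root_.map_pow]
    rw [h1, h2, add_pow_char]
    have hXp : ((X i : B') ^ p) ∈ Ie (A := B) (n := n) p := by
      apply Ideal.subset_span
      exact ⟨i, rfl⟩
    simpa using hXp
  have h3 := AlgHom.congr_fun hcomp g
  simp only [AlgHom.comp_apply, Ideal.Quotient.mkₐ_eq_mk] at h3
  rw [Ideal.Quotient.eq] at h3
  have h4 : (IsScalarTower.toAlgHom k B B') (expand p g) = C ((expand p g : B)) := by
    rw [IsScalarTower.coe_toAlgHom', algebraMap_eq]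
  rw [h4] at h3
  exact h3

lemma det_M_eq_jac (hn : 1 ≤ n) (F : Fin n → B) (M : Matrix ι ι B)
    (hAP : ∀ a b, M a b ∈ AP (k := k) (n := n) p)
    (hM : ∀ a, FP p F a = ∑ b : ι, M a b * monomial (emb b) 1) :
    M.det = jac F ^ (p ^ (n - 1) * (p * (p - 1) / 2)) := by
  classical
  set Xt : Fin n → B := fun i => X i with hXt
  have hWT : Wm p F = M * Wm p Xt := by
    refine Matrix.ext fun a c => ?_
    show coeff (emb c) (tay (FP p F a)) = _
    rw [hM a, _root_.map_sum, coeff_sum, Matrix.mul_apply]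
    refine Finset.sum_congr rfl fun b _ => ?_
    rw [_root_.map_mul]
    have hmem : tay (M a b) - C (M a b) ∈ Ie (A := B) (n := n) p :=
      tay_sub_C_mem p (M a b) (hAP a b)
    have hz2 : tay (M a b) = C (M a b) + (tay (M a b) - C (M a b)) := by ring
    rw [hz2, add_mul, coeff_add, coeff_C_mul]
    have hzz : coeff (emb c) ((tay (M a b) - C (M a b)) * tay (monomial (emb b) 1)) = 0 :=
      coeff_eq_zero_of_mem_Ie (Ideal.mul_mem_right _ _ hmem) (fun l => (c l).isLt)
    rw [hzz, add_zero]
    have hFPX : FP p Xt b = monomial (emb b) 1 := prod_X_pow_monomial _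
    show M a b * coeff (emb c) (tay (monomial (emb b) 1))
      = M a b * coeff (emb c) (tay (FP p Xt b))
    rw [hFPX]
  have hQX : Qm p Xt = 1 := by
    refine Matrix.ext fun i c => ?_
    show coeff (emb c) (∏ j, uu Xt j ^ (i j : ℕ)) = _
    have huX : ∀ j, uu Xt j = (X j : B') := by
      intro j
      rw [uu]
      show tay (X j) - C (X j) = (X j : B')
      rw [tay, aeval_X]
      ring
    simp_rw [huX]
    rw [prod_X_pow_monomial]
    have hei : (Finsupp.equivFunOnFinite.symm fun x => ((i x : ℕ))) = emb i := rfl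
    rw [hei, coeff_monomial, Matrix.one_apply]
    by_cases h : i = c
    · subst h; simp
    · rw [if_neg (fun hh => h (emb_injective hh)), if_neg h]
  have hJX : Jm Xt = 1 := by
    refine Matrix.ext fun i j => ?_
    show pderiv j (X i : B) = (1 : Matrix (Fin n) (Fin n) B) i j
    rw [pderiv_X, Matrix.one_apply]
    by_cases h : i = j
    · subst h; simp
    · simp [Pi.single_apply, h, Ne.symm h]
  have hdetT : (Wm p Xt).det = 1 := by
    rw [W_eq_P_mul_Q, Matrix.det_mul, det_P, one_mul, det_Q, hJX, det_DM_one, Matrix.det_one]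
  have hdetW : (Wm p F).det = jac F ^ (p ^ (n - 1) * (p * (p - 1) / 2)) := by
    rw [W_eq_P_mul_Q, Matrix.det_mul, det_P, one_mul, det_Q]
    rw [det_DM_domain hn]
    rfl
  rw [hWT, Matrix.det_mul, hdetT, mul_one] at hdetW
  exact hdetW

lemma AP_le_RXp (R : Subalgebra k B) : AP (k := k) (n := n) p ≤ RXp p R := by
  rintro x ⟨g, rfl⟩
  induction g using MvPolynomial.induction_on with
  | C r =>
      show (expand p) (C r) ∈ RXp p R
      rw [expand_C]
      exact (RXp p R).algebraMap_mem r
  | add f g hf hg =>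
      show (expand p) (f + g) ∈ RXp p R
      rw [_root_.map_add]
      exact add_mem hf hg
  | mul_X f i hf =>
      show (expand p) (f * X i) ∈ RXp p R
      rw [_root_.map_mul, expand_X]
      exact mul_mem hf (Algebra.subset_adjoin (Set.mem_union_right _ ⟨i, rfl⟩))

lemma R_le_RXp (R : Subalgebra k B) : R ≤ RXp p R :=
  fun _ hx => Algebra.subset_adjoin (Set.mem_union_left _ hx)

lemma jac_pow_mul_mem (hn : 1 ≤ n) (R : Subalgebra k B) (F : Fin n → B)
    (hF : ∀ i, F i ∈ R) (g : B) :
    jac F ^ (p ^ (n - 1) * (p * (p - 1) / 2)) * g ∈ RXp p R := by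
  classical
  set Msub : Matrix ι ι (AP (k := k) (n := n) p) :=
    Matrix.of fun a b => (decomp p (FP p F a)).choose b with hMsub
  set M : Matrix ι ι B := Msub.map (Subalgebra.val _) with hMdef
  have hAP : ∀ a b, M a b ∈ AP (k := k) (n := n) p := fun a b => (Msub a b).2
  have hMspec : ∀ a, FP p F a = ∑ b : ι, M a b * monomial (emb b) 1 := fun a =>
    (decomp p (FP p F a)).choose_spec
  have hdet : M.det = jac F ^ (p ^ (n - 1) * (p * (p - 1) / 2)) :=
    det_M_eq_jac p hn F M hAP hMspec
  have hadjmem : ∀ b a, M.adjugate b a ∈ AP (k := k) (n := n) p := by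
    intro b a
    have h1 : M.adjugate = (Msub.adjugate).map (Subalgebra.val _) := by
      have h2 := RingHom.map_adjugate ((Subalgebra.val (AP (k := k) (n := n) p)) :
        AP (k := k) (n := n) p →+* B) Msub
      rw [RingHom.mapMatrix_apply, RingHom.mapMatrix_apply] at h2
      simp only [AlgHom.coe_toRingHom] at h2
      rw [hMdef]
      exact h2.symm
    rw [h1]
    exact ((Msub.adjugate) b a).2
  have hcram : ∀ b : ι, jac F ^ (p ^ (n - 1) * (p * (p - 1) / 2)) * monomial (emb b) 1 =
      ∑ a : ι, M.adjugate b a * FP p F a := by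
    intro b
    have h1 : ∑ a : ι, M.adjugate b a * FP p F a =
        ∑ c : ι, (∑ a : ι, M.adjugate b a * M a c) * monomial (emb c) 1 := by
      simp_rw [hMspec, Finset.mul_sum]
      rw [Finset.sum_comm]
      refine Finset.sum_congr rfl fun c _ => ?_
      rw [Finset.sum_mul]
      refine Finset.sum_congr rfl fun a _ => ?_
      ring
    have h2 : ∀ c : ι, (∑ a : ι, M.adjugate b a * M a c) = (M.adjugate * M) b c := fun c => rfl
    have h3 : ∀ c : ι, (M.adjugate * M) b c = M.det * (if b = c then 1 else 0) := by
      intro c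
      rw [Matrix.adjugate_mul, Matrix.smul_apply, Matrix.one_apply, smul_eq_mul]
    rw [h1]
    simp_rw [h2, h3]
    rw [Finset.sum_congr rfl (fun c (_ : c ∈ Finset.univ) => by
      rw [mul_ite, mul_one, mul_zero, ite_mul, zero_mul])]
    rw [Finset.sum_ite_eq Finset.univ b (fun c => M.det * monomial (emb c) 1),
      if_pos (Finset.mem_univ b), hdet]
  obtain ⟨m, hm⟩ := decomp p g
  have hg : jac F ^ (p ^ (n - 1) * (p * (p - 1) / 2)) * g =
      ∑ b : ι, (m b : B) * (jac F ^ (p ^ (n - 1) * (p * (p - 1) / 2)) * monomial (emb b) 1) := by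
    rw [hm, Finset.mul_sum]
    exact Finset.sum_congr rfl fun b _ => by ring
  rw [hg]
  refine Subalgebra.sum_mem _ fun b _ => ?_
  rw [hcram, Finset.mul_sum]
  refine Subalgebra.sum_mem _ fun a _ => ?_
  refine mul_mem (AP_le_RXp p R (m b).2) (mul_mem (AP_le_RXp p R (hadjmem b a)) ?_)
  refine Subalgebra.prod_mem _ fun j _ => ?_
  exact pow_mem (R_le_RXp p R (hF j)) _

end Main

end JacAux

theorem stmt0 {k : Type*} [Field k] (p : ℕ) (hp : p.Prime) [CharP k p]
    (n : ℕ) (hn : 1 ≤ n) (R : Subalgebra k (MvPolynomial (Fin n) k))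
    (hprinc : (jacIdeal R).IsPrincipal) :
    ∀ f ∈ jacIdeal R ^ (p ^ n * (p - 1) / 2), f ∈ RXp p R := by
  classical
  haveI : Fact p.Prime := ⟨hp⟩
  intro f hf
  have hp2 := hp.two_le
  have hdvd : 2 ∣ p * (p - 1) := by
    have he := Nat.even_mul_succ_self (p - 1)
    have h1 : (p - 1) * (p - 1 + 1) = p * (p - 1) := by
      have h2 : p - 1 + 1 = p := by omega
      rw [h2]; ring
    rw [h1] at he
    exact he.two_dvd
  have hqeq : p ^ n * (p - 1) / 2 = p ^ (n - 1) * (p * (p - 1) / 2) := by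
    have hpow : p ^ n = p ^ (n - 1) * p := by
      conv_lhs => rw [show n = (n - 1) + 1 by omega]
      rw [pow_succ]
    rw [hpow, mul_assoc, Nat.mul_div_assoc _ hdvd]
  rw [hqeq] at hf
  have hq0pos : p ^ (n - 1) * (p * (p - 1) / 2) ≠ 0 := by
    have h2 : 2 ≤ p * (p - 1) := by
      have h3 : 2 * 1 ≤ p * (p - 1) := Nat.mul_le_mul hp2 (by omega)
      omega
    have h3 : 1 ≤ p * (p - 1) / 2 := by omega
    have h4 : 0 < p ^ (n - 1) := pow_pos (by omega) _
    exact Nat.mul_ne_zero (by omega) (by omega)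
  obtain ⟨h, hh⟩ := hprinc.principal
  rw [Ideal.submodule_span_eq] at hh
  by_cases hzero : h = 0
  · subst hzero
    rw [hh, Ideal.span_singleton_eq_bot.mpr rfl, ← Ideal.zero_eq_bot, zero_pow hq0pos,
      Ideal.zero_eq_bot, Ideal.mem_bot] at hf
    rw [hf]
    exact zero_mem _
  · let Z : Ideal (MvPolynomial (Fin n) k) :=
      { carrier := {z | ∀ g, z * g ∈ RXp p R}
        add_mem' := fun {a b} ha hb g => by rw [add_mul]; exact add_mem (ha g) (hb g)
        zero_mem' := fun g => by rw [zero_mul]; exact zero_mem _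
        smul_mem' := fun c z hz g => by
          have h1 : (c • z) * g = z * (c * g) := by
            rw [smul_eq_mul]; ring
          rw [h1]
          exact hz (c * g) }
    have hmemZ : ∀ z : MvPolynomial (Fin n) k, z ∈ Z ↔ ∀ g, z * g ∈ RXp p R :=
      fun z => Iff.rfl
    have hjacZ : ∀ F : Fin n → MvPolynomial (Fin n) k, (∀ i, F i ∈ R) →
        jac F ^ (p ^ (n - 1) * (p * (p - 1) / 2)) ∈ Z :=
      fun F hF => (hmemZ _).2 fun g => JacAux.jac_pow_mul_mem p hn R F hF g
    set Ugen : Set (MvPolynomial (Fin n) k) :=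
      {u | ∃ F : Fin n → MvPolynomial (Fin n) k, (∀ i, F i ∈ R) ∧ h * u = jac F} with hUgen
    have hone : (1 : MvPolynomial (Fin n) k) ∈ Ideal.span Ugen := by
      let hU : Ideal (MvPolynomial (Fin n) k) :=
        { carrier := {v | ∃ u ∈ Ideal.span Ugen, v = h * u}
          add_mem' := by
            rintro a b ⟨u1, hu1, e1⟩ ⟨u2, hu2, e2⟩
            exact ⟨u1 + u2, add_mem hu1 hu2, by rw [e1, e2, mul_add]⟩
          zero_mem' := ⟨0, zero_mem _, by rw [mul_zero]⟩
          smul_mem' := by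
            rintro c v ⟨u, hu, e⟩
            exact ⟨c * u, Ideal.mul_mem_left _ c hu, by rw [smul_eq_mul, e]; ring⟩ }
      have hmemhU : ∀ v : MvPolynomial (Fin n) k,
          v ∈ hU ↔ ∃ u ∈ Ideal.span Ugen, v = h * u := fun v => Iff.rfl
      have hSsub : {g | ∃ F : Fin n → MvPolynomial (Fin n) k, (∀ i, F i ∈ R) ∧ g = jac F} ⊆
          (hU : Set (MvPolynomial (Fin n) k)) := by
        rintro s ⟨F, hF, rfl⟩
        have hs : jac F ∈ jacIdeal R := Ideal.subset_span ⟨F, hF, rfl⟩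
        rw [hh, Ideal.mem_span_singleton'] at hs
        obtain ⟨u, hu⟩ := hs
        exact (hmemhU _).2 ⟨u, Ideal.subset_span ⟨F, hF, by rw [mul_comm]; exact hu⟩,
          by rw [← hu, mul_comm]⟩
      have hle : jacIdeal R ≤ hU := Ideal.span_le.2 hSsub
      have hhmem : h ∈ hU := by
        apply hle
        rw [hh]
        exact Ideal.subset_span rfl
      obtain ⟨u, huU, hhu⟩ := (hmemhU h).1 hhmem
      have huone : u = 1 := by
        have heq : h * u = h * 1 := by rw [mul_one, ← hhu]
        exact mul_left_cancel₀ hzero heq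
      rw [← huone]
      exact huU
    have hUq : (1 : MvPolynomial (Fin n) k) ∈
        Ideal.span ((fun u => u ^ (p ^ (n - 1) * (p * (p - 1) / 2))) '' Ugen) := by
      have hrad : Ideal.span Ugen ≤
          (Ideal.span ((fun u => u ^ (p ^ (n - 1) * (p * (p - 1) / 2))) '' Ugen)).radical := by
        rw [Ideal.span_le]
        intro u hu
        exact ⟨p ^ (n - 1) * (p * (p - 1) / 2), Ideal.subset_span ⟨u, hu, rfl⟩⟩
      obtain ⟨m, hm⟩ := hrad hone
      simpa using hm
    have hhq : h ^ (p ^ (n - 1) * (p * (p - 1) / 2)) ∈ Z := by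
      have hall : ∀ v ∈ Ideal.span ((fun u => u ^ (p ^ (n - 1) * (p * (p - 1) / 2))) '' Ugen),
          h ^ (p ^ (n - 1) * (p * (p - 1) / 2)) * v ∈ Z := by
        intro v hv
        refine Submodule.span_induction ?_ ?_ ?_ ?_ hv
        · rintro x ⟨u, ⟨F, hF, hu⟩, rfl⟩
          have hx : h ^ (p ^ (n - 1) * (p * (p - 1) / 2)) *
              u ^ (p ^ (n - 1) * (p * (p - 1) / 2))
              = jac F ^ (p ^ (n - 1) * (p * (p - 1) / 2)) := by
            rw [← mul_pow, hu]
          rw [hx]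
          exact hjacZ F hF
        · rw [mul_zero]; exact zero_mem _
        · intro x y _ _ hx hy
          rw [mul_add]; exact add_mem hx hy
        · intro a x _ hx
          have h1 : h ^ (p ^ (n - 1) * (p * (p - 1) / 2)) * (a • x) =
              a • (h ^ (p ^ (n - 1) * (p * (p - 1) / 2)) * x) := by
            rw [smul_eq_mul, smul_eq_mul]; ring
          rw [h1]
          exact Submodule.smul_mem Z a hx
      have h1 := hall 1 hUq
      rwa [mul_one] at h1
    have hfh : f ∈ Ideal.span {h ^ (p ^ (n - 1) * (p * (p - 1) / 2))} := by
      rw [← Ideal.span_singleton_pow, ← hh]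
      exact hf
    rw [Ideal.mem_span_singleton'] at hfh
    obtain ⟨w, hw⟩ := hfh
    rw [← hw, mul_comm]
    exact (hmemZ _).1 hhq w
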